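/- arXiv:2011.10822 — 2 statements merged into one kernel-verified Lean document; each statement's English description precedes it below -/
import Mathlib

section
/- Under the adaptive-sliding control scheme, the tracking error and its velocity converge to the origin. Precisely: let n, p, m be positive natural numbers, let q, q_d : ℝ → ℝⁿ be twice continuously differentiable with q_d, q_d', q_d'' bounded, set Δq = q − q_d, let λ > 0, and define the sliding vector s(t) = Δq'(t) + λ·Δq(t). Let M, C : ℝ → Matrix n n ℝ be continuously differentiable with M(t) symmetric and there exist 0 < m₀ ≤ m₁ with m₀‖x‖² ≤ xᵀM(t)x ≤ m₁‖x‖² for all t and x, with C bounded, and with the skew-symmetry property xᵀ(M'(t) − 2C(t))x = 0 for all t, x. Let Y : ℝ → Matrix n p ℝ and J : ℝ → Matrix m n ℝ be continuous and bounded, let θ_d ∈ ℝᵖ and F_ext ∈ ℝᵐ be constant, let K_v, K_p be symmetric positive definite n×n matrices, L_d a symmetric positive definite p×p matrix and P a symmetric positive definite m×m matrix. Suppose the estimates θ̂ : ℝ → ℝᵖ and F̂ : ℝ → ℝᵐ are differentiable and satisfy the adaptive laws θ̂'(t) = −L_d · Y(t)ᵀ · s(t) and F̂'(t) = P⁻¹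 · J(t) · s(t), and that the closed-loop dynamics M(t)·s'(t) + C(t)·s(t) + Y(t)·(θ_d − θ̂(t)) + K_v·Δq'(t) + K_p·Δq(t) − J(t)ᵀ·(F_ext − F̂(t)) = 0 holds for all t ≥ 0. Then Δq(t) → 0 and Δq'(t) → 0 as t → ∞. -/
open Matrix Filter Topology RealInnerProductSpace

notation "asc_ev" => WithLp.toLp 2

lemma asc_inner_mulVec_expand {a b : ℕ} (A : Matrix (Fin a) (Fin b) ℝ)
    (x : EuclideanSpace ℝ (Fin a)) (y : EuclideanSpace ℝ (Fin b)) :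
    ⟪x, asc_ev (A.mulVec y)⟫ = ∑ i, ∑ j, x i * (A i j * y j) := by
  simp [PiLp.inner_apply, RCLike.inner_apply, Matrix.mulVec, dotProduct, Finset.mul_sum]
  refine Finset.sum_congr rfl fun i _ => ?_
  rw [Finset.sum_mul]
  exact Finset.sum_congr rfl fun j _ => by ring

lemma asc_coord_le_norm {a : ℕ} (x : EuclideanSpace ℝ (Fin a)) (j : Fin a) :
    |x j| ≤ ‖x‖ := by
  rw [EuclideanSpace.norm_eq]
  calc |x j| = √(‖x j‖ ^ 2) := by rw [Real.sqrt_sq_eq_abs]; simp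
  _ ≤ √(∑ i, ‖x i‖ ^ 2) := Real.sqrt_le_sqrt
      (Finset.single_le_sum (f := fun i => ‖x i‖ ^ 2) (fun i _ => sq_nonneg _) (Finset.mem_univ j))

lemma asc_mulVec_norm_le {a b : ℕ} (A : Matrix (Fin a) (Fin b) ℝ) {B : ℝ} (hB0 : 0 ≤ B)
    (hB : ∀ i j, |A i j| ≤ B) (x : EuclideanSpace ℝ (Fin b)) :
    ‖asc_ev (A.mulVec x)‖ ≤ (a * b * B) * ‖x‖ := by
  have key : ∀ i, |asc_ev (A.mulVec x) i| ≤ b * B * ‖x‖ := by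
    intro i
    calc |asc_ev (A.mulVec x) i| = |∑ j, A i j * x j| := rfl
    _ ≤ ∑ j, |A i j * x j| := Finset.abs_sum_le_sum_abs _ _
    _ ≤ ∑ j : Fin b, B * ‖x‖ := by
        refine Finset.sum_le_sum fun j _ => ?_
        rw [abs_mul]
        exact mul_le_mul (hB i j) (asc_coord_le_norm x j) (abs_nonneg _) hB0
    _ = b * B * ‖x‖ := by simp [Finset.sum_const]; ring
  have h2 : ‖asc_ev (A.mulVec x)‖ ^ 2 ≤ a * (b * B * ‖x‖) ^ 2 := by
    rw [← real_inner_self_eq_norm_sq, PiLp.inner_apply]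
    calc (∑ i, ⟪asc_ev (A.mulVec x) i, asc_ev (A.mulVec x) i⟫)
        ≤ ∑ i : Fin a, (b * B * ‖x‖) ^ 2 := by
          refine Finset.sum_le_sum fun i _ => ?_
          have he : ⟪asc_ev (A.mulVec x) i, asc_ev (A.mulVec x) i⟫
              = (asc_ev (A.mulVec x) i) ^ 2 := by simp [RCLike.inner_apply]
          rw [he]
          calc (asc_ev (A.mulVec x) i) ^ 2 = |asc_ev (A.mulVec x) i| ^ 2 := (sq_abs _).symm
          _ ≤ (b * B * ‖x‖) ^ 2 := pow_le_pow_left₀ (abs_nonneg _) (key i) 2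
    _ = a * (b * B * ‖x‖) ^ 2 := by simp [Finset.sum_const]
  have h3 : ‖asc_ev (A.mulVec x)‖ ^ 2 ≤ ((a * b * B) * ‖x‖) ^ 2 := by
    refine h2.trans ?_
    have haa : (a : ℝ) ≤ (a:ℝ) ^ 2 := by
      rcases Nat.eq_zero_or_pos a with h | h
      · simp [h]
      · nlinarith [(Nat.one_le_cast (α := ℝ)).mpr h]
    nlinarith [sq_nonneg (b * B * ‖x‖), sq_nonneg ((a:ℝ) * b * B * ‖x‖)]
  calc ‖asc_ev (A.mulVec x)‖ = √(‖asc_ev (A.mulVec x)‖ ^ 2) := by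
        rw [Real.sqrt_sq (norm_nonneg _)]
  _ ≤ √(((a * b * B) * ‖x‖) ^ 2) := Real.sqrt_le_sqrt h3
  _ = (a * b * B) * ‖x‖ := Real.sqrt_sq (by positivity)

lemma asc_entry_bound {a b : ℕ} (A : Matrix (Fin a) (Fin b) ℝ) :
    ∃ B, 0 ≤ B ∧ ∀ i j, |A i j| ≤ B := by
  refine ⟨∑ i, ∑ j, |A i j|, by positivity, fun i j => ?_⟩
  calc |A i j| ≤ ∑ j', |A i j'| :=
    Finset.single_le_sum (f := fun j' => |A i j'|) (fun _ _ => abs_nonneg _) (Finset.mem_univ j)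
  _ ≤ ∑ i', ∑ j', |A i' j'| :=
    Finset.single_le_sum (f := fun i' => ∑ j', |A i' j'|)
      (fun _ _ => Finset.sum_nonneg fun _ _ => abs_nonneg _) (Finset.mem_univ i)

lemma asc_quad_smul {a : ℕ} (A : Matrix (Fin a) (Fin a) ℝ) (c : ℝ)
    (x : EuclideanSpace ℝ (Fin a)) :
    ⟪c • x, asc_ev (A.mulVec (c • x))⟫ = c ^ 2 * ⟪x, asc_ev (A.mulVec x)⟫ := by
  rw [asc_inner_mulVec_expand, asc_inner_mulVec_expand, Finset.mul_sum]
  refine Finset.sum_congr rfl fun i _ => ?_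
  rw [Finset.mul_sum]
  refine Finset.sum_congr rfl fun j _ => ?_
  simp only [PiLp.smul_apply, Pi.smul_apply, smul_eq_mul]; ring

lemma asc_quad_continuous {a : ℕ} (A : Matrix (Fin a) (Fin a) ℝ) :
    Continuous fun x : EuclideanSpace ℝ (Fin a) => ⟪x, asc_ev (A.mulVec x)⟫ := by
  have h : (fun x : EuclideanSpace ℝ (Fin a) => ⟪x, asc_ev (A.mulVec x)⟫)
      = fun x => ∑ i, ∑ j, x i * (A i j * x j) := funext fun x => asc_inner_mulVec_expand A x x
  rw [h]
  refine continuous_finset_sum _ fun i _ => continuous_finset_sum _ fun j _ => ?_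
  exact ((EuclideanSpace.proj i : EuclideanSpace ℝ (Fin a) →L[ℝ] ℝ).continuous).mul
    (continuous_const.mul (EuclideanSpace.proj j : EuclideanSpace ℝ (Fin a) →L[ℝ] ℝ).continuous)

lemma asc_pd_lower_bound {a : ℕ} (ha : 0 < a) (A : Matrix (Fin a) (Fin a) ℝ)
    (hA : ∀ x : EuclideanSpace ℝ (Fin a), x ≠ 0 → 0 < ⟪x, asc_ev (A.mulVec x)⟫) :
    ∃ c > 0, ∀ x : EuclideanSpace ℝ (Fin a), c * ‖x‖ ^ 2 ≤ ⟪x, asc_ev (A.mulVec x)⟫ := by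
  have hne : (Metric.sphere (0 : EuclideanSpace ℝ (Fin a)) 1).Nonempty := by
    refine ⟨EuclideanSpace.single ⟨0, ha⟩ 1, ?_⟩
    simp [EuclideanSpace.norm_single]
  obtain ⟨x₀, hx₀S, hmin⟩ := (isCompact_sphere (0 : EuclideanSpace ℝ (Fin a)) 1).exists_isMinOn
    hne (asc_quad_continuous A).continuousOn
  rw [mem_sphere_zero_iff_norm] at hx₀S
  have hx₀ne : x₀ ≠ 0 := fun h => by simp [h] at hx₀S
  refine ⟨⟪x₀, asc_ev (A.mulVec x₀)⟫, hA x₀ hx₀ne, fun x => ?_⟩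
  rcases eq_or_ne x 0 with rfl | hx
  · simp
  · have hnx : 0 < ‖x‖ := norm_pos_iff.mpr hx
    set u : EuclideanSpace ℝ (Fin a) := ‖x‖⁻¹ • x with hu
    have hunorm : ‖u‖ = 1 := by
      rw [hu, norm_smul]
      simp [abs_of_pos (inv_pos.mpr hnx)]
      field_simp
    have h1 : ⟪x₀, asc_ev (A.mulVec x₀)⟫ ≤ ⟪u, asc_ev (A.mulVec u)⟫ := hmin (mem_sphere_zero_iff_norm.mpr hunorm)
    have h2 : ⟪x, asc_ev (A.mulVec x)⟫ = ‖x‖ ^ 2 * ⟪u, asc_ev (A.mulVec u)⟫ := by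
      have : (‖x‖ : ℝ) • u = x := by
        rw [hu, smul_smul]; field_simp; exact one_smul _ _
      calc ⟪x, asc_ev (A.mulVec x)⟫ = ⟪(‖x‖:ℝ) • u, asc_ev (A.mulVec ((‖x‖:ℝ) • u))⟫ := by rw [← WithLp.ofLp_smul 2 (‖x‖:ℝ) u, this]
      _ = ‖x‖ ^ 2 * ⟪u, asc_ev (A.mulVec u)⟫ := asc_quad_smul A _ u
    rw [h2]
    nlinarith [sq_nonneg ‖x‖]

lemma asc_hasDerivAt_inner_mulVec {a b : ℕ} {u : ℝ → EuclideanSpace ℝ (Fin a)}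
    {v : ℝ → EuclideanSpace ℝ (Fin b)} {A : ℝ → Matrix (Fin a) (Fin b) ℝ}
    {u' : EuclideanSpace ℝ (Fin a)} {v' : EuclideanSpace ℝ (Fin b)}
    {A' : Matrix (Fin a) (Fin b) ℝ} {t : ℝ}
    (hu : ∀ i, HasDerivAt (fun τ => u τ i) (u' i) t)
    (hv : ∀ j, HasDerivAt (fun τ => v τ j) (v' j) t)
    (hA : ∀ i j, HasDerivAt (fun τ => A τ i j) (A' i j) t) :
    HasDerivAt (fun τ => ⟪u τ, asc_ev ((A τ).mulVec (v τ))⟫)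
      (⟪u', asc_ev ((A t).mulVec (v t))⟫ + ⟪u t, asc_ev (A'.mulVec (v t))⟫ + ⟪u t, asc_ev ((A t).mulVec v')⟫) t := by
  have hfun : (fun τ => ⟪u τ, asc_ev ((A τ).mulVec (v τ))⟫)
      = fun τ => ∑ i, ∑ j, u τ i * (A τ i j * v τ j) :=
    funext fun τ => asc_inner_mulVec_expand (A τ) (u τ) (v τ)
  have hval : (⟪u', asc_ev ((A t).mulVec (v t))⟫ + ⟪u t, asc_ev (A'.mulVec (v t))⟫ + ⟪u t, asc_ev ((A t).mulVec v')⟫)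
      = ∑ i, ∑ j, (u' i * (A t i j * v t j)
          + u t i * (A' i j * v t j + A t i j * v' j)) := by
    rw [asc_inner_mulVec_expand, asc_inner_mulVec_expand, asc_inner_mulVec_expand,
      ← Finset.sum_add_distrib, ← Finset.sum_add_distrib]
    refine Finset.sum_congr rfl fun i _ => ?_
    rw [← Finset.sum_add_distrib, ← Finset.sum_add_distrib]
    exact Finset.sum_congr rfl fun j _ => by ring
  rw [hfun, hval]
  exact HasDerivAt.fun_sum fun i _ => HasDerivAt.fun_sum fun j _ => (hu i).fun_mul ((hA i j).fun_mul (hv j))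

lemma asc_posDef {a : ℕ} (A : Matrix (Fin a) (Fin a) ℝ) (hA1 : Aᵀ = A)
    (hA2 : ∀ x : EuclideanSpace ℝ (Fin a), x ≠ 0 → 0 < ⟪x, asc_ev (A.mulVec x)⟫) : A.PosDef := by
  refine Matrix.PosDef.of_dotProduct_mulVec_pos ?_ ?_
  · rwa [Matrix.IsHermitian, conjTranspose_eq_transpose_of_trivial]
  · intro x hx
    have h := hA2 (asc_ev x) (by simpa using hx)
    simpa [dotProduct, PiLp.inner_apply, RCLike.inner_apply,
      Matrix.mulVec, mul_comm] using h

lemma asc_of_posDef {a : ℕ} {A : Matrix (Fin a) (Fin a) ℝ} (hA : A.PosDef) :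
    ∀ x : EuclideanSpace ℝ (Fin a), x ≠ 0 → 0 < ⟪x, asc_ev (A.mulVec x)⟫ := by
  intro x hx
  have h := hA.dotProduct_mulVec_pos (x := WithLp.ofLp x) (by simpa using hx)
  simpa [dotProduct, PiLp.inner_apply, RCLike.inner_apply, Matrix.mulVec, mul_comm] using h

lemma asc_inner_add_smul_mulVec {a b : ℕ} (A B : Matrix (Fin a) (Fin b) ℝ) (r : ℝ)
    (x : EuclideanSpace ℝ (Fin a)) (y : EuclideanSpace ℝ (Fin b)) :
    ⟪x, asc_ev ((A + r • B).mulVec y)⟫ = ⟪x, asc_ev (A.mulVec y)⟫ + r * ⟪x, asc_ev (B.mulVec y)⟫ := by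
  rw [asc_inner_mulVec_expand, asc_inner_mulVec_expand, asc_inner_mulVec_expand,
    Finset.mul_sum, ← Finset.sum_add_distrib]
  refine Finset.sum_congr rfl fun i _ => ?_
  rw [Finset.mul_sum, ← Finset.sum_add_distrib]
  refine Finset.sum_congr rfl fun j _ => ?_
  simp only [Matrix.add_apply, Matrix.smul_apply, smul_eq_mul]; ring

lemma asc_skew_expand {a : ℕ} (Mm Cm : Matrix (Fin a) (Fin a) ℝ)
    (x : EuclideanSpace ℝ (Fin a)) :
    ⟪x, asc_ev ((Mm - 2 • Cm).mulVec x)⟫ = ⟪x, asc_ev (Mm.mulVec x)⟫ - 2 * ⟪x, asc_ev (Cm.mulVec x)⟫ := by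
  rw [asc_inner_mulVec_expand, asc_inner_mulVec_expand, asc_inner_mulVec_expand,
    Finset.mul_sum, ← Finset.sum_sub_distrib]
  refine Finset.sum_congr rfl fun i _ => ?_
  rw [Finset.mul_sum, ← Finset.sum_sub_distrib]
  refine Finset.sum_congr rfl fun j _ => ?_
  simp only [Matrix.sub_apply, Matrix.smul_apply]
  simp only [nsmul_eq_mul]
  push_cast
  ring

lemma asc_inner_mulVec_neg {a b : ℕ} (A : Matrix (Fin a) (Fin b) ℝ)
    (x : EuclideanSpace ℝ (Fin a)) (y : EuclideanSpace ℝ (Fin b)) :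
    ⟪x, asc_ev (A.mulVec (-y))⟫ = -⟪x, asc_ev (A.mulVec y)⟫ := by
  rw [asc_inner_mulVec_expand, asc_inner_mulVec_expand, ← Finset.sum_neg_distrib]
  refine Finset.sum_congr rfl fun i _ => ?_
  rw [← Finset.sum_neg_distrib]
  refine Finset.sum_congr rfl fun j _ => ?_
  simp only [PiLp.neg_apply, Pi.neg_apply]; ring

/-- Barbalat-style lemma: if `V ≥ 0` is a Lyapunov function with `V' = -f`,
`f ≥ 0`, and `f` has a uniformly bounded derivative on `[0,∞)`, then `f → 0`. -/
lemma asc_barbalat (V f : ℝ → ℝ) (K : ℝ)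
    (hf0 : ∀ t, 0 ≤ f t)
    (hV0 : ∀ t, 0 ≤ t → 0 ≤ V t)
    (hVd : ∀ t, 0 ≤ t → HasDerivAt V (-(f t)) t)
    (d : ℝ → ℝ)
    (hd : ∀ t, 0 ≤ t → HasDerivAt f (d t) t)
    (hdK : ∀ t, 0 ≤ t → |d t| ≤ K) :
    Tendsto f atTop (𝓝 0) := by
  have hK0 : 0 ≤ K := le_trans (abs_nonneg _) (hdK 0 le_rfl)
  have hVmono : AntitoneOn V (Set.Ici 0) := by
    refine antitoneOn_of_deriv_nonpos (convex_Ici 0) ?_ ?_ ?_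
    · intro t ht; exact (hVd t ht).continuousAt.continuousWithinAt
    · intro t ht; rw [interior_Ici] at ht
      exact (hVd t ht.le).differentiableAt.differentiableWithinAt
    · intro t ht; rw [interior_Ici] at ht
      rw [(hVd t ht.le).deriv]; simpa using hf0 t
  rw [Metric.tendsto_atTop]
  by_contra hcon
  push_neg at hcon
  obtain ⟨ε, hε, hfreq⟩ := hcon
  set K' := K + 1 with hK'
  have hK'pos : 0 < K' := by linarith
  set δ := ε / (2 * K') with hδdef
  have hδpos : 0 < δ := by positivity
  set S := V '' Set.Ici (0:ℝ) with hS
  have hSne : S.Nonempty := ⟨V 0, ⟨0, Set.mem_Ici.mpr le_rfl, rfl⟩⟩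
  have hSbdd : BddBelow S := by
    refine ⟨0, fun x hx => ?_⟩
    obtain ⟨t, ht, rfl⟩ := hx
    exact hV0 t ht
  set L := sInf S with hL
  have hLle : ∀ t, 0 ≤ t → L ≤ V t := fun t ht => csInf_le hSbdd ⟨t, ht, rfl⟩
  have hη : 0 < ε/2 * δ := by positivity
  obtain ⟨a, haS, haL⟩ := exists_lt_of_csInf_lt hSne (lt_add_of_pos_right L hη)
  obtain ⟨T, hT0, rfl⟩ := haS
  obtain ⟨t₀, ht₀T, ht₀⟩ := hfreq T
  have ht₀0 : 0 ≤ t₀ := le_trans hT0 ht₀T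
  have hft₀ : ε ≤ f t₀ := by
    rwa [Real.dist_eq, sub_zero, abs_of_nonneg (hf0 t₀)] at ht₀
  have hIcc : Set.Icc t₀ (t₀ + δ) ⊆ Set.Ici (0:ℝ) := fun u hu => le_trans ht₀0 hu.1
  -- f stays above ε/2 on the interval
  have hlip : ∀ u ∈ Set.Icc t₀ (t₀ + δ), |f u - f t₀| ≤ K' * |u - t₀| := by
    intro u hu
    have h := Convex.norm_image_sub_le_of_norm_hasDerivWithin_le
      (f := f) (f' := d) (s := Set.Icc t₀ (t₀+δ)) (C := K')
      (fun x hx => (hd x (hIcc hx)).hasDerivWithinAt)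
      (fun x hx => by rw [Real.norm_eq_abs]; linarith [hdK x (hIcc hx)])
      (convex_Icc _ _) (Set.left_mem_Icc.mpr (by linarith)) hu
    simpa [Real.norm_eq_abs] using h
  have hfband : ∀ u ∈ Set.Icc t₀ (t₀+δ), ε/2 ≤ f u := by
    intro u hu
    have h1 := hlip u hu
    have h2 : |u - t₀| ≤ δ := by
      rw [abs_of_nonneg (by linarith [hu.1])]; linarith [hu.2]
    have h3 : |f u - f t₀| ≤ K' * δ := le_trans h1 (by nlinarith)
    have hKδ : K' * δ = ε/2 := by
      rw [hδdef]; field_simp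
    rw [hKδ] at h3
    have := abs_le.mp h3
    linarith [this.1]
  -- V decreases by at least ε/2 * δ over the interval
  have hdec : V (t₀ + δ) + ε/2 * (t₀ + δ) ≤ V t₀ + ε/2 * t₀ := by
    have hg : AntitoneOn (fun u => V u + ε/2 * u) (Set.Icc t₀ (t₀+δ)) := by
      have hlin : ∀ u : ℝ, HasDerivAt (fun x : ℝ => ε/2 * x) (ε/2) u := fun u => by
        simpa using (hasDerivAt_id u).const_mul (ε/2)
      refine antitoneOn_of_deriv_nonpos (convex_Icc _ _) ?_ ?_ ?_
      · intro u hu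
        exact ((hVd u (hIcc hu)).add (hlin u)).continuousAt.continuousWithinAt
      · intro u hu
        rw [interior_Icc] at hu
        exact ((hVd u (hIcc (Set.mem_Icc_of_Ioo hu))).add
          (hlin u)).differentiableAt.differentiableWithinAt
      · intro u hu
        rw [interior_Icc] at hu
        have hu' : u ∈ Set.Icc t₀ (t₀+δ) := Set.mem_Icc_of_Ioo hu
        have hD := (hVd u (hIcc hu')).add (hlin u)
        rw [show deriv (fun u => V u + ε / 2 * u) u = deriv (V + fun x => ε / 2 * x) u from rfl,
          hD.deriv]
        have := hfband u hu'
        linarith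
    exact hg (Set.left_mem_Icc.mpr (by linarith)) (Set.right_mem_Icc.mpr (by linarith)) (by linarith)
  have hVt₀ : V t₀ ≤ V T := hVmono (Set.mem_Ici.mpr hT0) (Set.mem_Ici.mpr ht₀0) ht₀T
  have hL1 : L ≤ V (t₀ + δ) := hLle _ (by linarith)
  have hexp : ε/2 * (t₀ + δ) = ε/2 * t₀ + ε/2 * δ := by ring
  linarith [hdec, hexp.le, hexp.ge]


/-- transpose moves across the inner product -/
lemma asc_inner_transpose_mulVec {a b : ℕ} (A : Matrix (Fin a) (Fin b) ℝ)
    (x : EuclideanSpace ℝ (Fin a)) (y : EuclideanSpace ℝ (Fin b)) :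
    ⟪x, asc_ev (A.mulVec y)⟫ = ⟪y, asc_ev (Aᵀ.mulVec x)⟫ := by
  rw [asc_inner_mulVec_expand, asc_inner_mulVec_expand, Finset.sum_comm]
  refine Finset.sum_congr rfl fun i _ => Finset.sum_congr rfl fun j _ => ?_
  rw [Matrix.transpose_apply]; ring

notation "asc_vp" => WithLp.ofLp

lemma asc_pi_deriv_eq {k : ℕ} (g : ℝ → EuclideanSpace ℝ (Fin k)) (t : ℝ)
    (hg : DifferentiableAt ℝ g t) :
    deriv (fun τ => WithLp.ofLp (g τ)) t = asc_vp (deriv g t) := by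
  have h1 : HasDerivAt g (deriv g t) t := hg.hasDerivAt
  have h2 : HasDerivAt (fun τ => WithLp.ofLp (g τ))
      (asc_vp (deriv g t)) t :=
    (EuclideanSpace.equiv (Fin k) ℝ).toContinuousLinearMap.hasFDerivAt.comp_hasDerivAt t h1
  exact h2.deriv

set_option maxHeartbeats 2000000 in
/-- **Theorem 4.1.1** (adaptive-sliding controller convergence).
Under the adaptive laws `θ̂' = -L_d Yᵀ s`, `F̂' = P⁻¹ J s` and the closed-loop dynamics
`M ṡ + C s + Y (θ_d - θ̂) + K_v Δq' + K_p Δq - Jᵀ (F_ext - F̂) = 0`, the tracking error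
`Δq = q - q_d` and its velocity `Δq'` converge to the origin. -/
theorem adaptive_sliding_convergence
    (n p m : ℕ) (hn : 0 < n) (hp : 0 < p) (hm : 0 < m)
    (q qd : ℝ → EuclideanSpace ℝ (Fin n))
    (hq : ContDiff ℝ 2 q) (hqd : ContDiff ℝ 2 qd)
    (hqd_bdd : ∃ B, ∀ t, ‖qd t‖ ≤ B)
    (hqd'_bdd : ∃ B, ∀ t, ‖deriv qd t‖ ≤ B)
    (hqd''_bdd : ∃ B, ∀ t, ‖deriv (deriv qd) t‖ ≤ B)
    (Δq : ℝ → EuclideanSpace ℝ (Fin n)) (hΔq : ∀ t, Δq t = q t - qd t)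
    (lam : ℝ) (hlam : 0 < lam)
    (s : ℝ → EuclideanSpace ℝ (Fin n))
    (hs : ∀ t, s t = deriv Δq t + lam • Δq t)
    (M C M' : ℝ → Matrix (Fin n) (Fin n) ℝ)
    (hM_diff : ∀ i j t, HasDerivAt (fun τ => M τ i j) (M' t i j) t)
    (hM'_cont : ∀ i j, Continuous fun t => M' t i j)
    (hM_symm : ∀ t, (M t)ᵀ = M t)
    (m₀ m₁ : ℝ) (hm₀ : 0 < m₀) (hm₀₁ : m₀ ≤ m₁)
    (hM_lb : ∀ (t : ℝ) (x : EuclideanSpace ℝ (Fin n)),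
      m₀ * ‖x‖ ^ 2 ≤ ⟪x, WithLp.toLp 2 ((M t).mulVec x)⟫)
    (hM_ub : ∀ (t : ℝ) (x : EuclideanSpace ℝ (Fin n)),
      ⟪x, WithLp.toLp 2 ((M t).mulVec x)⟫ ≤ m₁ * ‖x‖ ^ 2)
    (hC_cont : ∀ i j, Continuous fun t => C t i j)
    (hC_bdd : ∃ B, ∀ t i j, |C t i j| ≤ B)
    (hskew : ∀ (t : ℝ) (x : EuclideanSpace ℝ (Fin n)),
      ⟪x, WithLp.toLp 2 ((M' t - 2 • C t).mulVec x)⟫ = 0)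
    (Y : ℝ → Matrix (Fin n) (Fin p) ℝ) (J : ℝ → Matrix (Fin m) (Fin n) ℝ)
    (hY_cont : ∀ i j, Continuous fun t => Y t i j)
    (hY_bdd : ∃ B, ∀ t i j, |Y t i j| ≤ B)
    (hJ_cont : ∀ i j, Continuous fun t => J t i j)
    (hJ_bdd : ∃ B, ∀ t i j, |J t i j| ≤ B)
    (θd : EuclideanSpace ℝ (Fin p)) (Fext : EuclideanSpace ℝ (Fin m))
    (Kv Kp : Matrix (Fin n) (Fin n) ℝ)
    (hKv_symm : Kvᵀ = Kv)
    (hKv_pd : ∀ x : EuclideanSpace ℝ (Fin n), x ≠ 0 → 0 < ⟪x, WithLp.toLp 2 (Kv.mulVec x)⟫)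
    (hKp_symm : Kpᵀ = Kp)
    (hKp_pd : ∀ x : EuclideanSpace ℝ (Fin n), x ≠ 0 → 0 < ⟪x, WithLp.toLp 2 (Kp.mulVec x)⟫)
    (Ld : Matrix (Fin p) (Fin p) ℝ)
    (hLd_symm : Ldᵀ = Ld)
    (hLd_pd : ∀ x : EuclideanSpace ℝ (Fin p), x ≠ 0 → 0 < ⟪x, WithLp.toLp 2 (Ld.mulVec x)⟫)
    (P : Matrix (Fin m) (Fin m) ℝ)
    (hP_symm : Pᵀ = P)
    (hP_pd : ∀ x : EuclideanSpace ℝ (Fin m), x ≠ 0 → 0 < ⟪x, WithLp.toLp 2 (P.mulVec x)⟫)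
    (θhat : ℝ → EuclideanSpace ℝ (Fin p)) (Fhat : ℝ → EuclideanSpace ℝ (Fin m))
    (hθhat_diff : Differentiable ℝ θhat) (hFhat_diff : Differentiable ℝ Fhat)
    (hθ_law : ∀ t, deriv θhat t = -(Ld.mulVec ((Y t)ᵀ.mulVec (s t))))
    (hF_law : ∀ t, deriv Fhat t = P⁻¹.mulVec ((J t).mulVec (s t)))
    (hclosed : ∀ t, 0 ≤ t →
      (M t).mulVec (deriv (fun τ => WithLp.ofLp (s τ)) t) + (C t).mulVec (s t) + (Y t).mulVec (θd - θhat t)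
        + Kv.mulVec (deriv (fun τ => WithLp.ofLp (Δq τ)) t) + Kp.mulVec (Δq t)
        - (J t)ᵀ.mulVec (Fext - Fhat t) = 0) :
    Tendsto Δq atTop (𝓝 0) ∧ Tendsto (deriv Δq) atTop (𝓝 0) := by
  classical
  -- Part 0 : differentiability of the curves
  have hΔq_fun : Δq = fun t => q t - qd t := funext hΔq
  have hΔq_cd : ContDiff ℝ 2 Δq := by rw [hΔq_fun]; exact hq.sub hqd
  have hΔq_diff : Differentiable ℝ Δq := hΔq_cd.differentiable (by norm_num)
  have hΔq_cd' : ContDiff ℝ ((1:ℕ) + 1) Δq := by exact_mod_cast hΔq_cd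
  have hdΔq_diff : Differentiable ℝ (deriv Δq) :=
    ((contDiff_succ_iff_deriv.mp hΔq_cd').2.2).differentiable (by norm_num)
  have hs_fun : s = fun t => deriv Δq t + lam • Δq t := funext hs
  have hs_diff : Differentiable ℝ s := by
    rw [hs_fun]; exact hdΔq_diff.add (hΔq_diff.const_smul lam)
  have hds_eq : ∀ t, deriv s t = deriv (deriv Δq) t + lam • deriv Δq t := by
    intro t
    rw [hs_fun, deriv_fun_add (g := fun y => lam • Δq y) (hdΔq_diff t) ((hΔq_diff t).const_smul lam),
      deriv_fun_const_smul lam (hΔq_diff t)]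
  have coordD : ∀ {k : ℕ} {g : ℝ → EuclideanSpace ℝ (Fin k)} {w : EuclideanSpace ℝ (Fin k)}
      {t : ℝ}, HasDerivAt g w t → ∀ i, HasDerivAt (fun τ => g τ i) (w i) t := by
    intro k g w t hg i
    have h := (EuclideanSpace.proj (𝕜 := ℝ) i).hasFDerivAt.comp_hasDerivAt t hg
    exact h
  -- Part 1 : matrix positivity facts
  have pdLd := asc_posDef Ld hLd_symm hLd_pd
  have pdP := asc_posDef P hP_symm hP_pd
  have hLd_unit : IsUnit Ld.det := isUnit_iff_ne_zero.mpr pdLd.det_pos.ne'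
  have hP_unit : IsUnit P.det := isUnit_iff_ne_zero.mpr pdP.det_pos.ne'
  have hLdInv_symm : (Ld⁻¹)ᵀ = Ld⁻¹ := by rw [Matrix.transpose_nonsing_inv, hLd_symm]
  have hLdInv_pd := asc_of_posDef pdLd.inv
  have hKq_symm : (Kp + lam • Kv)ᵀ = Kp + lam • Kv := by
    rw [Matrix.transpose_add, Matrix.transpose_smul, hKp_symm, hKv_symm]
  have hKq_pd : ∀ x : EuclideanSpace ℝ (Fin n), x ≠ 0 → 0 < ⟪x, asc_ev ((Kp + lam • Kv).mulVec x)⟫ := by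
    intro x hx
    rw [asc_inner_add_smul_mulVec]
    have h1 := hKp_pd x hx
    have h2 := hKv_pd x hx
    nlinarith
  obtain ⟨cq, hcq, hcq_le⟩ := asc_pd_lower_bound hn _ hKq_pd
  obtain ⟨cv, hcv, hcv_le⟩ := asc_pd_lower_bound hn Kv hKv_pd
  obtain ⟨cp, hcp, hcp_le⟩ := asc_pd_lower_bound hn Kp hKp_pd
  obtain ⟨cθ, hcθ, hcθ_le⟩ := asc_pd_lower_bound hp Ld⁻¹ hLdInv_pd
  obtain ⟨cF, hcF, hcF_le⟩ := asc_pd_lower_bound hm P hP_pd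
  -- Part 2 : derivatives of the estimation errors
  have hθhat_d : ∀ t, HasDerivAt (fun τ => θd - θhat τ)
      (asc_ev (Ld.mulVec ((Y t)ᵀ.mulVec (s t)))) t := by
    intro t
    have h2 := (hasDerivAt_const t θd).fun_sub (hθhat_diff t).hasDerivAt
    rw [← WithLp.toLp_ofLp 2 (deriv θhat t), hθ_law t] at h2
    simpa using h2
  have hFhat_d : ∀ t, HasDerivAt (fun τ => Fext - Fhat τ)
      (-(asc_ev (P⁻¹.mulVec ((J t).mulVec (s t))))) t := by
    intro t
    have h2 := (hasDerivAt_const t Fext).fun_sub (hFhat_diff t).hasDerivAt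
    rw [← WithLp.toLp_ofLp 2 (deriv Fhat t), hF_law t] at h2
    simpa using h2
  -- Part 3 : rearranged closed-loop dynamics
  have hMds : ∀ t, 0 ≤ t → asc_ev ((M t).mulVec (asc_vp (deriv s t))) =
      asc_ev ((J t)ᵀ.mulVec (Fext - Fhat t)) - asc_ev ((C t).mulVec (s t))
      - asc_ev ((Y t).mulVec (θd - θhat t)) - asc_ev (Kv.mulVec (asc_vp (deriv Δq t)))
      - asc_ev (Kp.mulVec (Δq t)) := by
    intro t ht
    have h := hclosed t ht
    rw [asc_pi_deriv_eq s t (hs_diff t), asc_pi_deriv_eq Δq t (hΔq_diff t)] at h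
    have h3 : asc_ev ((M t).mulVec (asc_vp (deriv s t))) + asc_ev ((C t).mulVec (s t))
        + asc_ev ((Y t).mulVec (θd - θhat t)) + asc_ev (Kv.mulVec (asc_vp (deriv Δq t)))
        + asc_ev (Kp.mulVec (Δq t)) = asc_ev ((J t)ᵀ.mulVec (Fext - Fhat t)) := by
      rw [← sub_eq_zero]
      apply WithLp.ofLp_injective 2
      simpa using h
    rw [← h3]
    abel
  -- Part 4 : the Lyapunov function and its derivative
  set V : ℝ → ℝ := fun t =>
    (⟪s t, asc_ev ((M t).mulVec (s t))⟫ + ⟪Δq t, asc_ev ((Kp + lam • Kv).mulVec (Δq t))⟫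
      + ⟪θd - θhat t, asc_ev (Ld⁻¹.mulVec (θd - θhat t))⟫
      + ⟪Fext - Fhat t, asc_ev (P.mulVec (Fext - Fhat t))⟫) / 2 with hV_def
  set f : ℝ → ℝ := fun t =>
    ⟪deriv Δq t, asc_ev (Kv.mulVec (asc_vp (deriv Δq t)))⟫ + lam * ⟪Δq t, asc_ev (Kp.mulVec (Δq t))⟫ with hf_def
  have hVd : ∀ t : ℝ, HasDerivAt V
      (((⟪deriv s t, asc_ev ((M t).mulVec (s t))⟫ + ⟪s t, asc_ev ((M' t).mulVec (s t))⟫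
          + ⟪s t, asc_ev ((M t).mulVec (asc_vp (deriv s t)))⟫)
        + (⟪deriv Δq t, asc_ev ((Kp + lam • Kv).mulVec (Δq t))⟫
          + ⟪Δq t, asc_ev ((0 : Matrix (Fin n) (Fin n) ℝ).mulVec (Δq t))⟫
          + ⟪Δq t, asc_ev ((Kp + lam • Kv).mulVec (asc_vp (deriv Δq t)))⟫)
        + (⟪asc_ev (Ld.mulVec ((Y t)ᵀ.mulVec (s t))), asc_ev (Ld⁻¹.mulVec (θd - θhat t))⟫
          + ⟪θd - θhat t, asc_ev ((0 : Matrix (Fin p) (Fin p) ℝ).mulVec (θd - θhat t))⟫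
          + ⟪θd - θhat t, asc_ev (Ld⁻¹.mulVec (asc_ev (Ld.mulVec ((Y t)ᵀ.mulVec (s t)))))⟫)
        + (⟪-(asc_ev (P⁻¹.mulVec ((J t).mulVec (s t)))), asc_ev (P.mulVec (Fext - Fhat t))⟫
          + ⟪Fext - Fhat t, asc_ev ((0 : Matrix (Fin m) (Fin m) ℝ).mulVec (Fext - Fhat t))⟫
          + ⟪Fext - Fhat t, asc_ev (P.mulVec (-(asc_ev (P⁻¹.mulVec ((J t).mulVec (s t))))))⟫)) / 2) t := by
    intro t
    have h1 := asc_hasDerivAt_inner_mulVec (u := s) (v := s) (A := M)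
      (u' := deriv s t) (v' := deriv s t) (A' := M' t)
      (coordD (hs_diff t).hasDerivAt) (coordD (hs_diff t).hasDerivAt)
      (fun i j => hM_diff i j t)
    have h2 := asc_hasDerivAt_inner_mulVec (u := Δq) (v := Δq)
      (A := fun _ => Kp + lam • Kv) (u' := deriv Δq t) (v' := deriv Δq t) (A' := 0)
      (coordD (hΔq_diff t).hasDerivAt) (coordD (hΔq_diff t).hasDerivAt)
      (fun i j => by simpa using hasDerivAt_const t ((Kp + lam • Kv) i j))
    have h3 := asc_hasDerivAt_inner_mulVec (u := fun τ => θd - θhat τ)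
      (v := fun τ => θd - θhat τ) (A := fun _ => Ld⁻¹)
      (u' := asc_ev (Ld.mulVec ((Y t)ᵀ.mulVec (s t))))
      (v' := asc_ev (Ld.mulVec ((Y t)ᵀ.mulVec (s t)))) (A' := 0)
      (coordD (hθhat_d t)) (coordD (hθhat_d t))
      (fun i j => by simpa using hasDerivAt_const t (Ld⁻¹ i j))
    have h4 := asc_hasDerivAt_inner_mulVec (u := fun τ => Fext - Fhat τ)
      (v := fun τ => Fext - Fhat τ) (A := fun _ => P)
      (u' := -(asc_ev (P⁻¹.mulVec ((J t).mulVec (s t)))))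
      (v' := -(asc_ev (P⁻¹.mulVec ((J t).mulVec (s t))))) (A' := 0)
      (coordD (hFhat_d t)) (coordD (hFhat_d t))
      (fun i j => by simpa using hasDerivAt_const t (P i j))
    exact (((h1.add h2).add h3).add h4).div_const 2
  -- Part 5 : V' = -f for t ≥ 0
  have hVD : ∀ t, 0 ≤ t → HasDerivAt V (-(f t)) t := by
    intro t ht
    have eA : ⟪deriv s t, asc_ev ((M t).mulVec (s t))⟫ = ⟪s t, asc_ev ((M t).mulVec (asc_vp (deriv s t)))⟫ := by
      rw [asc_inner_transpose_mulVec, hM_symm]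
    have eB : ⟪s t, asc_ev ((M' t).mulVec (s t))⟫ = 2 * ⟪s t, asc_ev ((C t).mulVec (s t))⟫ := by
      have h := hskew t (s t)
      rw [asc_skew_expand] at h
      linarith
    have eC : ⟪s t, asc_ev ((M t).mulVec (asc_vp (deriv s t)))⟫
        = ⟪s t, asc_ev ((J t)ᵀ.mulVec (Fext - Fhat t))⟫ - ⟪s t, asc_ev ((C t).mulVec (s t))⟫
          - ⟪s t, asc_ev ((Y t).mulVec (θd - θhat t))⟫ - ⟪s t, asc_ev (Kv.mulVec (asc_vp (deriv Δq t)))⟫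
          - ⟪s t, asc_ev (Kp.mulVec (Δq t))⟫ := by
      have h := congrArg (fun z : EuclideanSpace ℝ (Fin n) => ⟪s t, z⟫) (hMds t ht)
      simpa only [inner_sub_right] using h
    have eD2a : ⟪deriv Δq t, asc_ev ((Kp + lam • Kv).mulVec (Δq t))⟫
        = ⟪deriv Δq t, asc_ev (Kp.mulVec (Δq t))⟫ + lam * ⟪deriv Δq t, asc_ev (Kv.mulVec (Δq t))⟫ :=
      asc_inner_add_smul_mulVec Kp Kv lam _ _
    have eD2b : ⟪Δq t, asc_ev ((0 : Matrix (Fin n) (Fin n) ℝ).mulVec (Δq t))⟫ = 0 := by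
      rw [asc_inner_mulVec_expand]; simp
    have eD2c : ⟪Δq t, asc_ev ((Kp + lam • Kv).mulVec (asc_vp (deriv Δq t)))⟫
        = ⟪deriv Δq t, asc_ev (Kp.mulVec (Δq t))⟫ + lam * ⟪deriv Δq t, asc_ev (Kv.mulVec (Δq t))⟫ := by
      rw [asc_inner_transpose_mulVec, hKq_symm]
      exact eD2a
    have key3 : asc_ev (Ld⁻¹.mulVec (Ld.mulVec ((Y t)ᵀ.mulVec (s t))))
        = asc_ev ((Y t)ᵀ.mulVec (s t)) := by
      apply congrArg asc_ev
      rw [Matrix.mulVec_mulVec, Matrix.nonsing_inv_mul Ld hLd_unit, Matrix.one_mulVec]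
    have eD3c : ⟪θd - θhat t, asc_ev (Ld⁻¹.mulVec (asc_ev (Ld.mulVec ((Y t)ᵀ.mulVec (s t)))))⟫
        = ⟪s t, asc_ev ((Y t).mulVec (θd - θhat t))⟫ := by
      calc ⟪θd - θhat t, asc_ev (Ld⁻¹.mulVec (asc_ev (Ld.mulVec ((Y t)ᵀ.mulVec (s t)))))⟫
          = ⟪θd - θhat t, asc_ev (Ld⁻¹.mulVec (Ld.mulVec ((Y t)ᵀ.mulVec (s t))))⟫ := rfl
        _ = ⟪θd - θhat t, asc_ev ((Y t)ᵀ.mulVec (s t))⟫ := by rw [key3]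
        _ = ⟪s t, asc_ev ((Y t).mulVec (θd - θhat t))⟫ :=
            (asc_inner_transpose_mulVec (Y t) (s t) (θd - θhat t)).symm
    have eD3a : ⟪asc_ev (Ld.mulVec ((Y t)ᵀ.mulVec (s t))), asc_ev (Ld⁻¹.mulVec (θd - θhat t))⟫
        = ⟪s t, asc_ev ((Y t).mulVec (θd - θhat t))⟫ := by
      rw [asc_inner_transpose_mulVec, hLdInv_symm]
      exact eD3c
    have eD3b : ⟪θd - θhat t, asc_ev ((0 : Matrix (Fin p) (Fin p) ℝ).mulVec (θd - θhat t))⟫ = 0 := by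
      rw [asc_inner_mulVec_expand]; simp
    have key4 : asc_ev (P.mulVec (P⁻¹.mulVec ((J t).mulVec (s t))))
        = asc_ev ((J t).mulVec (s t)) := by
      apply congrArg asc_ev
      rw [Matrix.mulVec_mulVec, Matrix.mul_nonsing_inv P hP_unit, Matrix.one_mulVec]
    have hcore : ⟪Fext - Fhat t, asc_ev (P.mulVec (asc_ev (P⁻¹.mulVec ((J t).mulVec (s t)))))⟫
        = ⟪s t, asc_ev ((J t)ᵀ.mulVec (Fext - Fhat t))⟫ := by
      calc ⟪Fext - Fhat t, asc_ev (P.mulVec (asc_ev (P⁻¹.mulVec ((J t).mulVec (s t)))))⟫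
          = ⟪Fext - Fhat t, asc_ev (P.mulVec (P⁻¹.mulVec ((J t).mulVec (s t))))⟫ := rfl
        _ = ⟪Fext - Fhat t, asc_ev ((J t).mulVec (s t))⟫ := by rw [key4]
        _ = ⟪s t, asc_ev ((J t)ᵀ.mulVec (Fext - Fhat t))⟫ :=
            asc_inner_transpose_mulVec (J t) (Fext - Fhat t) (s t)
    have eD4c : ⟪Fext - Fhat t, asc_ev (P.mulVec (-(asc_ev (P⁻¹.mulVec ((J t).mulVec (s t))))))⟫
        = -⟪s t, asc_ev ((J t)ᵀ.mulVec (Fext - Fhat t))⟫ := by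
      rw [asc_inner_mulVec_neg, hcore]
    have eD4a : ⟪-(asc_ev (P⁻¹.mulVec ((J t).mulVec (s t)))), asc_ev (P.mulVec (Fext - Fhat t))⟫
        = -⟪s t, asc_ev ((J t)ᵀ.mulVec (Fext - Fhat t))⟫ := by
      rw [inner_neg_left]
      have h5 : ⟪asc_ev (P⁻¹.mulVec ((J t).mulVec (s t))), asc_ev (P.mulVec (Fext - Fhat t))⟫
          = ⟪Fext - Fhat t, asc_ev (P.mulVec (asc_ev (P⁻¹.mulVec ((J t).mulVec (s t)))))⟫ := by
        rw [asc_inner_transpose_mulVec, hP_symm]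
        rfl
      rw [h5, hcore]
    have eD4b : ⟪Fext - Fhat t, asc_ev ((0 : Matrix (Fin m) (Fin m) ℝ).mulVec (Fext - Fhat t))⟫ = 0 := by
      rw [asc_inner_mulVec_expand]; simp
    have eKv' : ⟪Δq t, asc_ev (Kv.mulVec (asc_vp (deriv Δq t)))⟫ = ⟪deriv Δq t, asc_ev (Kv.mulVec (Δq t))⟫ := by
      rw [asc_inner_transpose_mulVec, hKv_symm]
    have eK : ⟪s t, asc_ev (Kv.mulVec (asc_vp (deriv Δq t)))⟫
        = ⟪deriv Δq t, asc_ev (Kv.mulVec (asc_vp (deriv Δq t)))⟫ + lam * ⟪deriv Δq t, asc_ev (Kv.mulVec (Δq t))⟫ := by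
      rw [hs t, inner_add_left, real_inner_smul_left, eKv']
    have eL : ⟪s t, asc_ev (Kp.mulVec (Δq t))⟫
        = ⟪deriv Δq t, asc_ev (Kp.mulVec (Δq t))⟫ + lam * ⟪Δq t, asc_ev (Kp.mulVec (Δq t))⟫ := by
      rw [hs t, inner_add_left, real_inner_smul_left]
    have hval : (((⟪deriv s t, asc_ev ((M t).mulVec (s t))⟫ + ⟪s t, asc_ev ((M' t).mulVec (s t))⟫
          + ⟪s t, asc_ev ((M t).mulVec (asc_vp (deriv s t)))⟫)
        + (⟪deriv Δq t, asc_ev ((Kp + lam • Kv).mulVec (Δq t))⟫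
          + ⟪Δq t, asc_ev ((0 : Matrix (Fin n) (Fin n) ℝ).mulVec (Δq t))⟫
          + ⟪Δq t, asc_ev ((Kp + lam • Kv).mulVec (asc_vp (deriv Δq t)))⟫)
        + (⟪asc_ev (Ld.mulVec ((Y t)ᵀ.mulVec (s t))), asc_ev (Ld⁻¹.mulVec (θd - θhat t))⟫
          + ⟪θd - θhat t, asc_ev ((0 : Matrix (Fin p) (Fin p) ℝ).mulVec (θd - θhat t))⟫
          + ⟪θd - θhat t, asc_ev (Ld⁻¹.mulVec (asc_ev (Ld.mulVec ((Y t)ᵀ.mulVec (s t)))))⟫)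
        + (⟪-(asc_ev (P⁻¹.mulVec ((J t).mulVec (s t)))), asc_ev (P.mulVec (Fext - Fhat t))⟫
          + ⟪Fext - Fhat t, asc_ev ((0 : Matrix (Fin m) (Fin m) ℝ).mulVec (Fext - Fhat t))⟫
          + ⟪Fext - Fhat t, asc_ev (P.mulVec (-(asc_ev (P⁻¹.mulVec ((J t).mulVec (s t))))))⟫)) / 2)
        = -(f t) := by
      rw [eA, eB, eC, eD2a, eD2b, eD2c, eD3a, eD3b, eD3c, eD4a, eD4b, eD4c, eK, eL]
      simp only [hf_def]
      ring
    exact hval ▸ hVd t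
  -- Part 6 : nonnegativity and boundedness along trajectories
  have hVsum : ∀ t, ⟪s t, asc_ev ((M t).mulVec (s t))⟫ + ⟪Δq t, asc_ev ((Kp + lam • Kv).mulVec (Δq t))⟫
      + ⟪θd - θhat t, asc_ev (Ld⁻¹.mulVec (θd - θhat t))⟫
      + ⟪Fext - Fhat t, asc_ev (P.mulVec (Fext - Fhat t))⟫ = 2 * V t := by
    intro t; simp only [hV_def]; ring
  have hterm1 : ∀ t, (0:ℝ) ≤ ⟪s t, asc_ev ((M t).mulVec (s t))⟫ :=
    fun t => le_trans (mul_nonneg hm₀.le (sq_nonneg _)) (hM_lb t (s t))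
  have hterm2 : ∀ t, (0:ℝ) ≤ ⟪Δq t, asc_ev ((Kp + lam • Kv).mulVec (Δq t))⟫ :=
    fun t => le_trans (mul_nonneg hcq.le (sq_nonneg _)) (hcq_le (Δq t))
  have hterm3 : ∀ t, (0:ℝ) ≤ ⟪θd - θhat t, asc_ev (Ld⁻¹.mulVec (θd - θhat t))⟫ :=
    fun t => le_trans (mul_nonneg hcθ.le (sq_nonneg _)) (hcθ_le _)
  have hterm4 : ∀ t, (0:ℝ) ≤ ⟪Fext - Fhat t, asc_ev (P.mulVec (Fext - Fhat t))⟫ :=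
    fun t => le_trans (mul_nonneg hcF.le (sq_nonneg _)) (hcF_le _)
  have hV0 : ∀ t, 0 ≤ V t := by
    intro t
    have h := hVsum t
    have := hterm1 t; have := hterm2 t; have := hterm3 t; have := hterm4 t
    linarith
  have hf_lb : ∀ t, cv * ‖deriv Δq t‖^2 + lam * (cp * ‖Δq t‖^2) ≤ f t := by
    intro t
    simp only [hf_def]
    have h1 := hcv_le (deriv Δq t)
    have h2 := hcp_le (Δq t)
    have h1' : cv * ‖deriv Δq t‖^2 ≤ ⟪deriv Δq t, asc_ev (Kv.mulVec (asc_vp (deriv Δq t)))⟫ := h1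
    nlinarith
  have hf0 : ∀ t, 0 ≤ f t := by
    intro t
    refine le_trans ?_ (hf_lb t)
    have := mul_nonneg hcv.le (sq_nonneg ‖deriv Δq t‖)
    have := mul_nonneg hcp.le (sq_nonneg ‖Δq t‖)
    nlinarith
  have hVmono : AntitoneOn V (Set.Ici 0) := by
    refine antitoneOn_of_deriv_nonpos (convex_Ici 0) ?_ ?_ ?_
    · intro t ht; exact (hVd t).continuousAt.continuousWithinAt
    · intro t ht; exact (hVd t).differentiableAt.differentiableWithinAt
    · intro t ht
      rw [interior_Ici] at ht
      rw [(hVD t ht.le).deriv]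
      simpa using hf0 t
  have hVle : ∀ t, 0 ≤ t → V t ≤ V 0 :=
    fun t ht => hVmono (Set.mem_Ici.mpr le_rfl) (Set.mem_Ici.mpr ht) ht
  have terms_le : ∀ t, 0 ≤ t → m₀ * ‖s t‖^2 ≤ 2 * V 0 ∧ cq * ‖Δq t‖^2 ≤ 2 * V 0
      ∧ cθ * ‖θd - θhat t‖^2 ≤ 2 * V 0 ∧ cF * ‖Fext - Fhat t‖^2 ≤ 2 * V 0 := by
    intro t ht
    have h3 := hVle t ht
    have hsum := hVsum t
    have a1 := hM_lb t (s t)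
    have a2 := hcq_le (Δq t)
    have a3 := hcθ_le (θd - θhat t)
    have a4 := hcF_le (Fext - Fhat t)
    rw [WithLp.ofLp_sub] at a3 a4
    have b1 := hterm1 t; have b2 := hterm2 t; have b3 := hterm3 t; have b4 := hterm4 t
    exact ⟨by linarith, by linarith, by linarith, by linarith⟩
  have bound_of : ∀ (x c : ℝ), 0 < c → c * x^2 ≤ 2 * V 0 → 0 ≤ x → x ≤ √(2 * V 0 / c) := by
    intro x c hc h hx
    have h4 : x^2 ≤ 2 * V 0 / c := by rw [le_div_iff₀ hc]; linarith
    calc x = √(x^2) := (Real.sqrt_sq hx).symm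
    _ ≤ _ := Real.sqrt_le_sqrt h4
  have hBs : ∀ t, 0 ≤ t → ‖s t‖ ≤ √(2 * V 0 / m₀) :=
    fun t ht => bound_of _ _ hm₀ (terms_le t ht).1 (norm_nonneg _)
  have hBq : ∀ t, 0 ≤ t → ‖Δq t‖ ≤ √(2 * V 0 / cq) :=
    fun t ht => bound_of _ _ hcq (terms_le t ht).2.1 (norm_nonneg _)
  have hBθ : ∀ t, 0 ≤ t → ‖θd - θhat t‖ ≤ √(2 * V 0 / cθ) :=
    fun t ht => bound_of _ _ hcθ (terms_le t ht).2.2.1 (norm_nonneg _)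
  have hBF : ∀ t, 0 ≤ t → ‖Fext - Fhat t‖ ≤ √(2 * V 0 / cF) :=
    fun t ht => bound_of _ _ hcF (terms_le t ht).2.2.2 (norm_nonneg _)
  have hdq_eq : ∀ t, deriv Δq t = s t - lam • Δq t := by
    intro t; rw [hs t]; abel
  have hBdq : ∀ t, 0 ≤ t → ‖deriv Δq t‖ ≤ √(2 * V 0 / m₀) + lam * √(2 * V 0 / cq) := by
    intro t ht
    rw [hdq_eq t]
    calc ‖s t - lam • Δq t‖ ≤ ‖s t‖ + ‖lam • Δq t‖ := norm_sub_le _ _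
    _ = ‖s t‖ + lam * ‖Δq t‖ := by rw [norm_smul, Real.norm_eq_abs, abs_of_pos hlam]
    _ ≤ _ := add_le_add (hBs t ht) (mul_le_mul_of_nonneg_left (hBq t ht) hlam.le)
  -- Part 7 : uniform bounds on derivatives
  set Bs := √(2 * V 0 / m₀) with hBs_def
  set Bq := √(2 * V 0 / cq) with hBq_def
  set Bθ := √(2 * V 0 / cθ) with hBθ_def
  set BF := √(2 * V 0 / cF) with hBF_def
  set Bdq := Bs + lam * Bq with hBdq_def
  obtain ⟨BC, hBC0, hBC⟩ : ∃ B, 0 ≤ B ∧ ∀ t i j, |C t i j| ≤ B := by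
    obtain ⟨B, hB⟩ := hC_bdd
    exact ⟨max B 0, le_max_right _ _, fun t i j => le_trans (hB t i j) (le_max_left _ _)⟩
  obtain ⟨BY, hBY0, hBY⟩ : ∃ B, 0 ≤ B ∧ ∀ t i j, |Y t i j| ≤ B := by
    obtain ⟨B, hB⟩ := hY_bdd
    exact ⟨max B 0, le_max_right _ _, fun t i j => le_trans (hB t i j) (le_max_left _ _)⟩
  obtain ⟨BJ, hBJ0, hBJ⟩ : ∃ B, 0 ≤ B ∧ ∀ t i j, |J t i j| ≤ B := by
    obtain ⟨B, hB⟩ := hJ_bdd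
    exact ⟨max B 0, le_max_right _ _, fun t i j => le_trans (hB t i j) (le_max_left _ _)⟩
  obtain ⟨BKv, hBKv0, hBKv⟩ := asc_entry_bound Kv
  obtain ⟨BKp, hBKp0, hBKp⟩ := asc_entry_bound Kp
  set BR := (↑n*↑m*BJ)*BF + (↑n*↑n*BC)*Bs + (↑n*↑p*BY)*Bθ + (↑n*↑n*BKv)*Bdq + (↑n*↑n*BKp)*Bq
    with hBR_def
  have hRHS_norm : ∀ t, 0 ≤ t → ‖asc_ev ((J t)ᵀ.mulVec (Fext - Fhat t))
      - asc_ev ((C t).mulVec (s t)) - asc_ev ((Y t).mulVec (θd - θhat t))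
      - asc_ev (Kv.mulVec (asc_vp (deriv Δq t))) - asc_ev (Kp.mulVec (Δq t))‖ ≤ BR := by
    intro t ht
    have n1 : ‖asc_ev ((J t)ᵀ.mulVec (Fext - Fhat t))‖ ≤ (↑n*↑m*BJ)*BF := by
      refine le_trans (asc_mulVec_norm_le _ hBJ0
        (fun i j => by rw [Matrix.transpose_apply]; exact hBJ t j i) _) ?_
      exact mul_le_mul_of_nonneg_left (hBF t ht)
        (mul_nonneg (mul_nonneg (Nat.cast_nonneg n) (Nat.cast_nonneg m)) hBJ0)
    have n2 : ‖asc_ev ((C t).mulVec (s t))‖ ≤ (↑n*↑n*BC)*Bs := by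
      refine le_trans (asc_mulVec_norm_le _ hBC0 (fun i j => hBC t i j) _) ?_
      exact mul_le_mul_of_nonneg_left (hBs t ht)
        (mul_nonneg (mul_nonneg (Nat.cast_nonneg n) (Nat.cast_nonneg n)) hBC0)
    have n3 : ‖asc_ev ((Y t).mulVec (θd - θhat t))‖ ≤ (↑n*↑p*BY)*Bθ := by
      refine le_trans (asc_mulVec_norm_le _ hBY0 (fun i j => hBY t i j) _) ?_
      exact mul_le_mul_of_nonneg_left (hBθ t ht)
        (mul_nonneg (mul_nonneg (Nat.cast_nonneg n) (Nat.cast_nonneg p)) hBY0)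
    have n4 : ‖asc_ev (Kv.mulVec (asc_vp (deriv Δq t)))‖ ≤ (↑n*↑n*BKv)*Bdq := by
      refine le_trans (asc_mulVec_norm_le Kv hBKv0 hBKv (deriv Δq t)) ?_
      exact mul_le_mul_of_nonneg_left (hBdq t ht)
        (mul_nonneg (mul_nonneg (Nat.cast_nonneg n) (Nat.cast_nonneg n)) hBKv0)
    have n5 : ‖asc_ev (Kp.mulVec (Δq t))‖ ≤ (↑n*↑n*BKp)*Bq := by
      refine le_trans (asc_mulVec_norm_le Kp hBKp0 hBKp (Δq t)) ?_
      exact mul_le_mul_of_nonneg_left (hBq t ht)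
        (mul_nonneg (mul_nonneg (Nat.cast_nonneg n) (Nat.cast_nonneg n)) hBKp0)
    have t1 := norm_sub_le (asc_ev ((J t)ᵀ.mulVec (Fext - Fhat t))
      - asc_ev ((C t).mulVec (s t)) - asc_ev ((Y t).mulVec (θd - θhat t))
      - asc_ev (Kv.mulVec (asc_vp (deriv Δq t)))) (asc_ev (Kp.mulVec (Δq t)))
    have t2 := norm_sub_le (asc_ev ((J t)ᵀ.mulVec (Fext - Fhat t))
      - asc_ev ((C t).mulVec (s t)) - asc_ev ((Y t).mulVec (θd - θhat t)))
      (asc_ev (Kv.mulVec (asc_vp (deriv Δq t))))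
    have t3 := norm_sub_le (asc_ev ((J t)ᵀ.mulVec (Fext - Fhat t))
      - asc_ev ((C t).mulVec (s t))) (asc_ev ((Y t).mulVec (θd - θhat t)))
    have t4 := norm_sub_le (asc_ev ((J t)ᵀ.mulVec (Fext - Fhat t)))
      (asc_ev ((C t).mulVec (s t)))
    rw [hBR_def]
    linarith
  have hBR0 : 0 ≤ BR := le_trans (norm_nonneg _) (hRHS_norm 0 le_rfl)
  have hds_bd : ∀ t, 0 ≤ t → ‖deriv s t‖ ≤ BR / m₀ := by
    intro t ht
    have h2 : m₀ * ‖deriv s t‖^2 ≤ ⟪deriv s t, asc_ev ((M t).mulVec (asc_vp (deriv s t)))⟫ :=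
      hM_lb t (deriv s t)
    have h3 : ⟪deriv s t, asc_ev ((M t).mulVec (asc_vp (deriv s t)))⟫
        = ⟪deriv s t, asc_ev ((J t)ᵀ.mulVec (Fext - Fhat t))
          - asc_ev ((C t).mulVec (s t)) - asc_ev ((Y t).mulVec (θd - θhat t))
          - asc_ev (Kv.mulVec (asc_vp (deriv Δq t))) - asc_ev (Kp.mulVec (Δq t))⟫ :=
      congrArg (fun z : EuclideanSpace ℝ (Fin n) => ⟪deriv s t, z⟫) (hMds t ht)
    have h6 := real_inner_le_norm (deriv s t) (asc_ev ((J t)ᵀ.mulVec (Fext - Fhat t))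
      - asc_ev ((C t).mulVec (s t)) - asc_ev ((Y t).mulVec (θd - θhat t))
      - asc_ev (Kv.mulVec (asc_vp (deriv Δq t))) - asc_ev (Kp.mulVec (Δq t)))
    have h5 := hRHS_norm t ht
    rcases eq_or_lt_of_le (norm_nonneg (deriv s t)) with h0 | h0
    · rw [← h0]; exact div_nonneg hBR0 hm₀.le
    · rw [le_div_iff₀ hm₀]
      nlinarith [mul_le_mul_of_nonneg_left h5 (norm_nonneg (deriv s t))]
  have hd2q_eq : ∀ t, deriv (deriv Δq) t = deriv s t - lam • deriv Δq t := by
    intro t; rw [hds_eq t]; abel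
  set B2 := BR/m₀ + lam * Bdq with hB2_def
  have hBd2q : ∀ t, 0 ≤ t → ‖deriv (deriv Δq) t‖ ≤ B2 := by
    intro t ht
    rw [hd2q_eq t, hB2_def]
    calc ‖deriv s t - lam • deriv Δq t‖ ≤ ‖deriv s t‖ + ‖lam • deriv Δq t‖ := norm_sub_le _ _
    _ = ‖deriv s t‖ + lam * ‖deriv Δq t‖ := by rw [norm_smul, Real.norm_eq_abs, abs_of_pos hlam]
    _ ≤ _ := add_le_add (hds_bd t ht) (mul_le_mul_of_nonneg_left (hBdq t ht) hlam.le)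
  -- Part 7b : derivative of f and its uniform bound
  have hfd : ∀ t, HasDerivAt f
      ((⟪deriv (deriv Δq) t, asc_ev (Kv.mulVec (asc_vp (deriv Δq t)))⟫
        + ⟪deriv Δq t, asc_ev ((0 : Matrix (Fin n) (Fin n) ℝ).mulVec (asc_vp (deriv Δq t)))⟫
        + ⟪deriv Δq t, asc_ev (Kv.mulVec (asc_vp (deriv (deriv Δq) t)))⟫)
        + lam * (⟪deriv Δq t, asc_ev (Kp.mulVec (Δq t))⟫
          + ⟪Δq t, asc_ev ((0 : Matrix (Fin n) (Fin n) ℝ).mulVec (Δq t))⟫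
          + ⟪Δq t, asc_ev (Kp.mulVec (asc_vp (deriv Δq t)))⟫)) t := by
    intro t
    have h1 := asc_hasDerivAt_inner_mulVec (u := deriv Δq) (v := deriv Δq) (A := fun _ => Kv)
      (u' := deriv (deriv Δq) t) (v' := deriv (deriv Δq) t) (A' := 0)
      (coordD (hdΔq_diff t).hasDerivAt) (coordD (hdΔq_diff t).hasDerivAt)
      (fun i j => by simpa using hasDerivAt_const t (Kv i j))
    have h2 := asc_hasDerivAt_inner_mulVec (u := Δq) (v := Δq) (A := fun _ => Kp)
      (u' := deriv Δq t) (v' := deriv Δq t) (A' := 0)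
      (coordD (hΔq_diff t).hasDerivAt) (coordD (hΔq_diff t).hasDerivAt)
      (fun i j => by simpa using hasDerivAt_const t (Kp i j))
    exact h1.add (h2.const_mul lam)
  set Kf := B2 * ((↑n*↑n*BKv) * Bdq) + Bdq * ((↑n*↑n*BKv) * B2)
    + lam * (Bdq * ((↑n*↑n*BKp) * Bq)) + lam * (Bq * ((↑n*↑n*BKp) * Bdq)) + 1 with hKf_def
  have hB20 : 0 ≤ B2 := by
    rw [hB2_def]
    have h1 : (0:ℝ) ≤ BR/m₀ := div_nonneg hBR0 hm₀.le
    have h2 : (0:ℝ) ≤ Bdq := by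
      rw [hBdq_def]
      have := Real.sqrt_nonneg (2 * V 0 / m₀)
      have := Real.sqrt_nonneg (2 * V 0 / cq)
      nlinarith
    nlinarith
  have hBdq0 : (0:ℝ) ≤ Bdq := by
    rw [hBdq_def]
    have := Real.sqrt_nonneg (2 * V 0 / m₀)
    have := Real.sqrt_nonneg (2 * V 0 / cq)
    nlinarith
  have hBq0 : (0:ℝ) ≤ Bq := by rw [hBq_def]; exact Real.sqrt_nonneg _
  have hKB1 : (0:ℝ) ≤ ↑n*↑n*BKv :=
    mul_nonneg (mul_nonneg (Nat.cast_nonneg n) (Nat.cast_nonneg n)) hBKv0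
  have hKB2 : (0:ℝ) ≤ ↑n*↑n*BKp :=
    mul_nonneg (mul_nonneg (Nat.cast_nonneg n) (Nat.cast_nonneg n)) hBKp0
  have hdbd : ∀ t, 0 ≤ t →
      |(⟪deriv (deriv Δq) t, asc_ev (Kv.mulVec (asc_vp (deriv Δq t)))⟫
        + ⟪deriv Δq t, asc_ev ((0 : Matrix (Fin n) (Fin n) ℝ).mulVec (asc_vp (deriv Δq t)))⟫
        + ⟪deriv Δq t, asc_ev (Kv.mulVec (asc_vp (deriv (deriv Δq) t)))⟫)
        + lam * (⟪deriv Δq t, asc_ev (Kp.mulVec (Δq t))⟫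
          + ⟪Δq t, asc_ev ((0 : Matrix (Fin n) (Fin n) ℝ).mulVec (Δq t))⟫
          + ⟪Δq t, asc_ev (Kp.mulVec (asc_vp (deriv Δq t)))⟫)| ≤ Kf := by
    intro t ht
    have hz1 : ⟪deriv Δq t, asc_ev ((0 : Matrix (Fin n) (Fin n) ℝ).mulVec (asc_vp (deriv Δq t)))⟫
        = 0 := by rw [asc_inner_mulVec_expand]; simp
    have hz2 : ⟪Δq t, asc_ev ((0 : Matrix (Fin n) (Fin n) ℝ).mulVec (Δq t))⟫ = 0 := by
      rw [asc_inner_mulVec_expand]; simp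
    have hB2t := hBd2q t ht
    have hBdqt := hBdq t ht
    have hBqt := hBq t ht
    have a1 : |⟪deriv (deriv Δq) t, asc_ev (Kv.mulVec (asc_vp (deriv Δq t)))⟫|
        ≤ B2 * ((↑n*↑n*BKv) * Bdq) := by
      calc |⟪deriv (deriv Δq) t, asc_ev (Kv.mulVec (asc_vp (deriv Δq t)))⟫|
          ≤ ‖deriv (deriv Δq) t‖ * ‖asc_ev (Kv.mulVec (asc_vp (deriv Δq t)))‖ :=
            abs_real_inner_le_norm _ _
      _ ≤ B2 * ((↑n*↑n*BKv) * Bdq) := by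
          refine mul_le_mul hB2t (le_trans (asc_mulVec_norm_le Kv hBKv0 hBKv (deriv Δq t))
            (mul_le_mul_of_nonneg_left hBdqt hKB1)) (norm_nonneg _) hB20
    have a2 : |⟪deriv Δq t, asc_ev (Kv.mulVec (asc_vp (deriv (deriv Δq) t)))⟫|
        ≤ Bdq * ((↑n*↑n*BKv) * B2) := by
      calc |⟪deriv Δq t, asc_ev (Kv.mulVec (asc_vp (deriv (deriv Δq) t)))⟫|
          ≤ ‖deriv Δq t‖ * ‖asc_ev (Kv.mulVec (asc_vp (deriv (deriv Δq) t)))‖ :=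
            abs_real_inner_le_norm _ _
      _ ≤ Bdq * ((↑n*↑n*BKv) * B2) := by
          refine mul_le_mul hBdqt (le_trans (asc_mulVec_norm_le Kv hBKv0 hBKv (deriv (deriv Δq) t))
            (mul_le_mul_of_nonneg_left hB2t hKB1)) (norm_nonneg _) hBdq0
    have a3 : |⟪deriv Δq t, asc_ev (Kp.mulVec (Δq t))⟫| ≤ Bdq * ((↑n*↑n*BKp) * Bq) := by
      calc |⟪deriv Δq t, asc_ev (Kp.mulVec (Δq t))⟫|
          ≤ ‖deriv Δq t‖ * ‖asc_ev (Kp.mulVec (Δq t))‖ := abs_real_inner_le_norm _ _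
      _ ≤ Bdq * ((↑n*↑n*BKp) * Bq) := by
          refine mul_le_mul hBdqt (le_trans (asc_mulVec_norm_le Kp hBKp0 hBKp (Δq t))
            (mul_le_mul_of_nonneg_left hBqt hKB2)) (norm_nonneg _) hBdq0
    have a4 : |⟪Δq t, asc_ev (Kp.mulVec (asc_vp (deriv Δq t)))⟫| ≤ Bq * ((↑n*↑n*BKp) * Bdq) := by
      calc |⟪Δq t, asc_ev (Kp.mulVec (asc_vp (deriv Δq t)))⟫|
          ≤ ‖Δq t‖ * ‖asc_ev (Kp.mulVec (asc_vp (deriv Δq t)))‖ := abs_real_inner_le_norm _ _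
      _ ≤ Bq * ((↑n*↑n*BKp) * Bdq) := by
          refine mul_le_mul hBqt (le_trans (asc_mulVec_norm_le Kp hBKp0 hBKp (deriv Δq t))
            (mul_le_mul_of_nonneg_left hBdqt hKB2)) (norm_nonneg _) hBq0
    obtain ⟨a1l, a1u⟩ := abs_le.mp a1
    obtain ⟨a2l, a2u⟩ := abs_le.mp a2
    obtain ⟨a3l, a3u⟩ := abs_le.mp a3
    obtain ⟨a4l, a4u⟩ := abs_le.mp a4
    have p3u := mul_le_mul_of_nonneg_left a3u hlam.le
    have p3l := mul_le_mul_of_nonneg_left a3l hlam.le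
    have p4u := mul_le_mul_of_nonneg_left a4u hlam.le
    have p4l := mul_le_mul_of_nonneg_left a4l hlam.le
    rw [hz1, hz2, abs_le, hKf_def]
    constructor
    · nlinarith
    · nlinarith
  -- Part 8 : conclusion via the Barbalat-type lemma
  have hconv : Tendsto f atTop (𝓝 0) :=
    asc_barbalat V f Kf hf0 (fun t _ => hV0 t) hVD _ (fun t _ => hfd t) hdbd
  constructor
  · rw [tendsto_zero_iff_norm_tendsto_zero]
    have hle : ∀ t, ‖Δq t‖^2 ≤ f t / (lam * cp) := by
      intro t
      rw [le_div_iff₀ (mul_pos hlam hcp)]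
      have h1 := hf_lb t
      have h2 := mul_nonneg hcv.le (sq_nonneg ‖deriv Δq t‖)
      linarith
    have hsq : Tendsto (fun t => ‖Δq t‖^2) atTop (𝓝 0) := by
      have hd := hconv.div_const (lam * cp)
      rw [zero_div] at hd
      exact squeeze_zero (fun t => sq_nonneg _) hle hd
    have h2 := hsq.sqrt
    rw [Real.sqrt_zero] at h2
    exact h2.congr fun t => Real.sqrt_sq (norm_nonneg _)
  · rw [tendsto_zero_iff_norm_tendsto_zero]
    have hle : ∀ t, ‖deriv Δq t‖^2 ≤ f t / cv := by
      intro t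
      rw [le_div_iff₀ hcv]
      have h1 := hf_lb t
      have h2 := mul_nonneg hlam.le (mul_nonneg hcp.le (sq_nonneg ‖Δq t‖))
      linarith
    have hsq : Tendsto (fun t => ‖deriv Δq t‖^2) atTop (𝓝 0) := by
      have hd := hconv.div_const cv
      rw [zero_div] at hd
      exact squeeze_zero (fun t => sq_nonneg _) hle hd
    have h2 := hsq.sqrt
    rw [Real.sqrt_zero] at h2
    exact h2.congr fun t => Real.sqrt_sq (norm_nonneg _)
end

section
/- Let s, Δq : ℝ → ℝⁿ, Δθ : ℝ → ℝᵖ, ΔF : ℝ → ℝᵐ be differentiable, M : ℝ → Matrix n n ℝ differentiable with M(t) symmetric for all t, C : ℝ → Matrix n n ℝ, and let K_v, K_p, L_d, P be symmetric positive definite matrices of the appropriate sizes, λ > 0. Assume: (i) the skew-symmetry property xᵀ(M'(t) − 2C(t))x = 0 for all t and x; (ii) the closed-loop dynamics M(t)·s'(t) + C(t)·s(t) + Y(t)·Δθ(t) + K_v·Δq'(t) + K_p·Δq(t) − J(t)ᵀ·ΔF(t) = 0; (iii) the adaptive laws Δθ'(t) = L_d·Y(t)ᵀ·s(t) and ΔF'(t)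 = −P⁻¹·J(t)·s(t). Then the derivative of V(t) = (1/2)·sᵀM s + (1/2)·ΔθᵀL_d⁻¹Δθ + (1/2)·Δqᵀ(K_p + λK_v)Δq + (1/2)·ΔFᵀP ΔF satisfies V'(t) = −s(t)ᵀ·(K_v·Δq'(t) + K_p·Δq(t)) + Δq(t)ᵀ·(K_p + λ·K_v)·Δq'(t) for all t. -/
open Matrix Filter Topology RealInnerProductSpace

section Aux

lemma lyap_inner_eq_dot {n : ℕ} (x y : EuclideanSpace ℝ (Fin n)) :
    ⟪x, y⟫ = (x : Fin n → ℝ) ⬝ᵥ (y : Fin n → ℝ) := by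
  simp [PiLp.inner_apply, RCLike.inner_apply, dotProduct, mul_comm]

lemma lyap_hasDerivAt_coord {n : ℕ} {x : ℝ → EuclideanSpace ℝ (Fin n)}
    {v : EuclideanSpace ℝ (Fin n)} {t : ℝ}
    (hx : HasDerivAt x v t) (i : Fin n) :
    HasDerivAt (fun τ => x τ i) (v i) t := by
  have h := (EuclideanSpace.proj (𝕜 := ℝ) i).hasFDerivAt.comp_hasDerivAt t hx
  exact h

lemma lyap_quad_deriv {n : ℕ} (x x' : ℝ → EuclideanSpace ℝ (Fin n))
    (A A' : ℝ → Matrix (Fin n) (Fin n) ℝ)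
    (hx : ∀ t, HasDerivAt x (x' t) t)
    (hA : ∀ i j t, HasDerivAt (fun τ => A τ i j) (A' t i j) t) (t : ℝ) :
    HasDerivAt (fun τ => ⟪x τ, WithLp.toLp 2 ((A τ).mulVec (x τ))⟫)
      (⟪x' t, WithLp.toLp 2 ((A t).mulVec (x t))⟫ + ⟪x t, WithLp.toLp 2 ((A' t).mulVec (x t))⟫
        + ⟪x t, WithLp.toLp 2 ((A t).mulVec (x' t))⟫) t := by
  have key : ∀ τ, ⟪x τ, WithLp.toLp 2 ((A τ).mulVec (x τ))⟫
      = ∑ i, ∑ j, x τ i * (A τ i j * x τ j) := by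
    intro τ
    rw [lyap_inner_eq_dot]
    simp only [WithLp.ofLp_toLp, Matrix.mulVec, dotProduct, Finset.mul_sum]
  have h1 : HasDerivAt (fun τ => ∑ i, ∑ j, x τ i * (A τ i j * x τ j))
      (∑ i, ∑ j, (x' t i * (A t i j * x t j)
        + x t i * (A' t i j * x t j + A t i j * x' t j))) t := by
    refine HasDerivAt.fun_sum fun i _ => HasDerivAt.fun_sum fun j _ => ?_
    exact (lyap_hasDerivAt_coord (hx t) i).mul
      ((hA i j t).mul (lyap_hasDerivAt_coord (hx t) j))
  have h2 : HasDerivAt (fun τ => ⟪x τ, WithLp.toLp 2 ((A τ).mulVec (x τ))⟫)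
      (∑ i, ∑ j, (x' t i * (A t i j * x t j)
        + x t i * (A' t i j * x t j + A t i j * x' t j))) t := by
    have hfun : (fun τ => ⟪x τ, WithLp.toLp 2 ((A τ).mulVec (x τ))⟫)
        = fun τ => ∑ i, ∑ j, x τ i * (A τ i j * x τ j) := funext key
    rw [hfun]; exact h1
  have hval : (⟪x' t, WithLp.toLp 2 ((A t).mulVec (x t))⟫ + ⟪x t, WithLp.toLp 2 ((A' t).mulVec (x t))⟫
        + ⟪x t, WithLp.toLp 2 ((A t).mulVec (x' t))⟫)
      = ∑ i, ∑ j, (x' t i * (A t i j * x t j)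
        + x t i * (A' t i j * x t j + A t i j * x' t j)) := by
    simp only [lyap_inner_eq_dot,
      WithLp.ofLp_toLp, Matrix.mulVec, dotProduct, Finset.mul_sum]
    rw [← Finset.sum_add_distrib, ← Finset.sum_add_distrib]
    refine Finset.sum_congr rfl fun i _ => ?_
    rw [← Finset.sum_add_distrib, ← Finset.sum_add_distrib]
    refine Finset.sum_congr rfl fun j _ => ?_
    ring
  rw [hval]
  exact h2

lemma lyap_quad_deriv_const {n : ℕ} (x x' : ℝ → EuclideanSpace ℝ (Fin n))
    (B : Matrix (Fin n) (Fin n) ℝ)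
    (hx : ∀ t, HasDerivAt x (x' t) t) (t : ℝ) :
    HasDerivAt (fun τ => ⟪x τ, WithLp.toLp 2 (B.mulVec (x τ))⟫)
      (⟪x' t, WithLp.toLp 2 (B.mulVec (x t))⟫ + ⟪x t, WithLp.toLp 2 (B.mulVec (x' t))⟫) t := by
  have := lyap_quad_deriv x x' (fun _ => B) (fun _ => 0) hx
    (fun i j t => by simpa using hasDerivAt_const t (B i j)) t
  simpa using this

lemma lyap_dot_sym {n : ℕ} {A : Matrix (Fin n) (Fin n) ℝ} (hA : Aᵀ = A)
    (u v : Fin n → ℝ) : u ⬝ᵥ A.mulVec v = v ⬝ᵥ A.mulVec u := by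
  rw [Matrix.dotProduct_mulVec, ← Matrix.mulVec_transpose, hA, dotProduct_comm]

lemma lyap_pd_isUnit_det {k : ℕ} {A : Matrix (Fin k) (Fin k) ℝ}
    (hA : ∀ x : EuclideanSpace ℝ (Fin k), x ≠ 0 → 0 < ⟪x, WithLp.toLp 2 (A.mulVec x)⟫) :
    IsUnit A.det := by
  rw [isUnit_iff_ne_zero]
  intro hdet
  obtain ⟨v, hv, hAv⟩ := Matrix.exists_mulVec_eq_zero_iff.2 hdet
  have h := hA (WithLp.toLp 2 v) (fun h0 => hv (by simpa using congrArg WithLp.ofLp h0))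
  simp [hAv] at h

end Aux

/-- Equation (4-13): along the closed-loop trajectories, using skew-symmetry of `Ṁ - 2C`
and the adaptive laws, the derivative of the Lyapunov function is
`V' = -sᵀ(K_v Δq' + K_p Δq) + Δqᵀ(K_p + λ K_v) Δq'`. -/
theorem lyapunov_derivative
    (n p m : ℕ)
    (s Δq s' Δq' : ℝ → EuclideanSpace ℝ (Fin n))
    (Δθ Δθ' : ℝ → EuclideanSpace ℝ (Fin p))
    (ΔF ΔF' : ℝ → EuclideanSpace ℝ (Fin m))
    (hs : ∀ t, HasDerivAt s (s' t) t)
    (hΔq : ∀ t, HasDerivAt Δq (Δq' t) t)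
    (hΔθ : ∀ t, HasDerivAt Δθ (Δθ' t) t)
    (hΔF : ∀ t, HasDerivAt ΔF (ΔF' t) t)
    (M M' C : ℝ → Matrix (Fin n) (Fin n) ℝ)
    (hM : ∀ i j t, HasDerivAt (fun τ => M τ i j) (M' t i j) t)
    (hM_symm : ∀ t, (M t)ᵀ = M t)
    (Y : ℝ → Matrix (Fin n) (Fin p) ℝ) (J : ℝ → Matrix (Fin m) (Fin n) ℝ)
    (hY_cont : ∀ i j, Continuous fun t => Y t i j)
    (hJ_cont : ∀ i j, Continuous fun t => J t i j)
    (Kv Kp : Matrix (Fin n) (Fin n) ℝ)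
    (Ld : Matrix (Fin p) (Fin p) ℝ)
    (P : Matrix (Fin m) (Fin m) ℝ)
    (lam : ℝ) (hlam : 0 < lam)
    (hKv_symm : Kvᵀ = Kv)
    (hKv_pd : ∀ x : EuclideanSpace ℝ (Fin n), x ≠ 0 → 0 < ⟪x, WithLp.toLp 2 (Kv.mulVec x)⟫)
    (hKp_symm : Kpᵀ = Kp)
    (hKp_pd : ∀ x : EuclideanSpace ℝ (Fin n), x ≠ 0 → 0 < ⟪x, WithLp.toLp 2 (Kp.mulVec x)⟫)
    (hLd_symm : Ldᵀ = Ld)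
    (hLd_pd : ∀ x : EuclideanSpace ℝ (Fin p), x ≠ 0 → 0 < ⟪x, WithLp.toLp 2 (Ld.mulVec x)⟫)
    (hP_symm : Pᵀ = P)
    (hP_pd : ∀ x : EuclideanSpace ℝ (Fin m), x ≠ 0 → 0 < ⟪x, WithLp.toLp 2 (P.mulVec x)⟫)
    (hskew : ∀ (t : ℝ) (x : EuclideanSpace ℝ (Fin n)),
      ⟪x, WithLp.toLp 2 ((M' t - 2 • C t).mulVec x)⟫ = 0)
    (hclosed : ∀ t,
      (M t).mulVec (s' t) + (C t).mulVec (s t) + (Y t).mulVec (Δθ t)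
        + Kv.mulVec (Δq' t) + Kp.mulVec (Δq t) - (J t)ᵀ.mulVec (ΔF t) = 0)
    (hθ_law : ∀ t, Δθ' t = Ld.mulVec ((Y t)ᵀ.mulVec (s t)))
    (hF_law : ∀ t, ΔF' t = -(P⁻¹.mulVec ((J t).mulVec (s t))))
    (V : ℝ → ℝ)
    (hV : ∀ t, V t =
      (1 / 2) * ⟪s t, WithLp.toLp 2 ((M t).mulVec (s t))⟫
        + (1 / 2) * ⟪Δθ t, WithLp.toLp 2 ((Ld⁻¹).mulVec (Δθ t))⟫
        + (1 / 2) * ⟪Δq t, WithLp.toLp 2 ((Kp + lam • Kv).mulVec (Δq t))⟫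
        + (1 / 2) * ⟪ΔF t, WithLp.toLp 2 (P.mulVec (ΔF t))⟫) :
    ∀ t, HasDerivAt V
      (-⟪s t, WithLp.toLp 2 (Kv.mulVec (Δq' t) + Kp.mulVec (Δq t))⟫
        + ⟪Δq t, WithLp.toLp 2 ((Kp + lam • Kv).mulVec (Δq' t))⟫) t := by
  intro t
  have hLd_det : IsUnit Ld.det := lyap_pd_isUnit_det hLd_pd
  have hP_det : IsUnit P.det := lyap_pd_isUnit_det hP_pd
  have h1 := lyap_quad_deriv s s' M M' hs hM t
  have h2 := lyap_quad_deriv_const Δθ Δθ' Ld⁻¹ hΔθ t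
  have h3 := lyap_quad_deriv_const Δq Δq' (Kp + lam • Kv) hΔq t
  have h4 := lyap_quad_deriv_const ΔF ΔF' P hΔF t
  have hVeq : V = fun τ =>
      (1 / 2) * ⟪s τ, WithLp.toLp 2 ((M τ).mulVec (s τ))⟫
        + (1 / 2) * ⟪Δθ τ, WithLp.toLp 2 ((Ld⁻¹).mulVec (Δθ τ))⟫
        + (1 / 2) * ⟪Δq τ, WithLp.toLp 2 ((Kp + lam • Kv).mulVec (Δq τ))⟫
        + (1 / 2) * ⟪ΔF τ, WithLp.toLp 2 (P.mulVec (ΔF τ))⟫ := funext hV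
  have hD := (((h1.const_mul (1/2 : ℝ)).add (h2.const_mul (1/2 : ℝ))).add
      (h3.const_mul (1/2 : ℝ))).add (h4.const_mul (1/2 : ℝ))
  rw [hVeq]
  refine hD.congr_deriv ?_
  -- now a scalar identity
  -- symmetry facts
  have hLdInv_symm : (Ld⁻¹)ᵀ = Ld⁻¹ := by
    rw [Matrix.transpose_nonsing_inv, hLd_symm]
  have hK_symm : (Kp + lam • Kv)ᵀ = Kp + lam • Kv := by
    rw [Matrix.transpose_add, Matrix.transpose_smul, hKp_symm, hKv_symm]
  -- scalar facts
  have f1 : (s' t : Fin n → ℝ) ⬝ᵥ (M t).mulVec (s t) = s t ⬝ᵥ (M t).mulVec (s' t) :=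
    lyap_dot_sym (hM_symm t) _ _
  have f2 : (Δθ' t : Fin p → ℝ) ⬝ᵥ (Ld⁻¹).mulVec (Δθ t) = Δθ t ⬝ᵥ (Ld⁻¹).mulVec (Δθ' t) :=
    lyap_dot_sym hLdInv_symm _ _
  have f3 : (Δq' t : Fin n → ℝ) ⬝ᵥ (Kp + lam • Kv).mulVec (Δq t)
      = Δq t ⬝ᵥ (Kp + lam • Kv).mulVec (Δq' t) := lyap_dot_sym hK_symm _ _
  have f4 : (ΔF' t : Fin m → ℝ) ⬝ᵥ P.mulVec (ΔF t) = ΔF t ⬝ᵥ P.mulVec (ΔF' t) :=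
    lyap_dot_sym hP_symm _ _
  -- skew symmetry
  have f5 : (s t : Fin n → ℝ) ⬝ᵥ (M' t).mulVec (s t)
      = 2 * (s t ⬝ᵥ (C t).mulVec (s t)) := by
    have h := hskew t (s t)
    rw [lyap_inner_eq_dot, WithLp.ofLp_toLp] at h
    rw [Matrix.sub_mulVec, dotProduct_sub] at h
    have h2C : ((2 : ℕ) • C t).mulVec (s t) = (2 : ℝ) • ((C t).mulVec (s t)) := by
      rw [← Nat.cast_smul_eq_nsmul ℝ 2 (C t), Matrix.smul_mulVec]
      norm_num
    rw [h2C, dotProduct_smul] at h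
    have := sub_eq_zero.mp h
    simpa [smul_eq_mul] using this
  -- closed loop dotted with s
  have f6 : (s t : Fin n → ℝ) ⬝ᵥ (M t).mulVec (s' t)
      = s t ⬝ᵥ (J t)ᵀ.mulVec (ΔF t) - s t ⬝ᵥ (C t).mulVec (s t)
        - s t ⬝ᵥ (Y t).mulVec (Δθ t) - s t ⬝ᵥ Kv.mulVec (Δq' t)
        - s t ⬝ᵥ Kp.mulVec (Δq t) := by
    have h := hclosed t
    have hM' : (M t).mulVec (s' t)
        = (J t)ᵀ.mulVec (ΔF t) - (C t).mulVec (s t) - (Y t).mulVec (Δθ t)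
          - Kv.mulVec (Δq' t) - Kp.mulVec (Δq t) := by
      have h' : ((M t).mulVec (s' t) : Fin n → ℝ) + (C t).mulVec (s t)
          + (Y t).mulVec (Δθ t) + Kv.mulVec (Δq' t) + Kp.mulVec (Δq t)
          - (J t)ᵀ.mulVec (ΔF t) = 0 := h
      linear_combination (norm := abel) h'
    rw [hM', dotProduct_sub, dotProduct_sub, dotProduct_sub,
      dotProduct_sub]
  -- θ law
  have f7 : (Δθ t : Fin p → ℝ) ⬝ᵥ (Ld⁻¹).mulVec (Δθ' t)
      = s t ⬝ᵥ (Y t).mulVec (Δθ t) := by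
    rw [hθ_law t]
    rw [show (Ld⁻¹).mulVec (Ld.mulVec ((Y t)ᵀ.mulVec (s t)))
        = (Y t)ᵀ.mulVec (s t) by
      rw [Matrix.mulVec_mulVec, Matrix.nonsing_inv_mul Ld hLd_det, Matrix.one_mulVec]]
    rw [Matrix.dotProduct_mulVec, Matrix.vecMul_transpose, dotProduct_comm]
  -- F law
  have f8 : (ΔF t : Fin m → ℝ) ⬝ᵥ P.mulVec (ΔF' t)
      = -(s t ⬝ᵥ (J t)ᵀ.mulVec (ΔF t)) := by
    rw [hF_law t]
    rw [show P.mulVec (-(P⁻¹.mulVec ((J t).mulVec (s t))))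
        = -((J t).mulVec (s t)) by
      rw [Matrix.mulVec_neg, Matrix.mulVec_mulVec, Matrix.mul_nonsing_inv P hP_det,
        Matrix.one_mulVec]]
    rw [dotProduct_neg]
    congr 1
    rw [Matrix.dotProduct_mulVec, ← Matrix.mulVec_transpose, dotProduct_comm]
  -- assemble
  simp only [lyap_inner_eq_dot, WithLp.ofLp_toLp, dotProduct_add] at *
  linarith [f1, f2, f3, f4, f5, f6, f7, f8]
end
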